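/- arXiv:2112.01614 — 3 statements merged into one kernel-verified Lean document; each statement's English description precedes it below -/
import Mathlib

section
/- Let n ≥ 1, A_n the n×n upper shift matrix, b_n the last standard basis vector, k_j(ω) = binom(n, j−1)·ω^{n+1−j}, and K(ω) = A_n − b_n·k(ω). Then for every ω ∈ ℝ the spectrum of K(ω) (over ℂ) is exactly the singleton {−ω}; in particular every closed-loop eigenvalue of the bandwidth-parametrized controller matrix equals −ω, so for ω > 0 the matrix is Hurwitz. -/
open Matrix

/-- The `n × n` upper shift matrix: ones on the superdiagonal, zeros elsewhere. -/
noncomputable def shiftMat (n : ℕ) : Matrix (Fin n) (Fin n) ℝ :=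
  Matrix.of fun i j => if (i : ℕ) + 1 = (j : ℕ) then 1 else 0

/-- The last standard basis vector of `ℝ^n`. -/
noncomputable def lastBasis (n : ℕ) : Fin n → ℝ :=
  fun i => if (i : ℕ) = n - 1 then 1 else 0

/-- Bandwidth-parametrized feedback gain: `k_j(ω) = binom(n, j−1)·ω^{n+1−j}` for `j = 1,…,n`. -/
noncomputable def ctrlGain (n : ℕ) (ω : ℝ) : Fin n → ℝ :=
  fun j => (n.choose (j : ℕ)) * ω ^ (n - (j : ℕ))

/-- The closed-loop controller matrix `K(ω) = A_n − b_n·k(ω)`. -/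
noncomputable def ctrlMat (n : ℕ) (ω : ℝ) : Matrix (Fin n) (Fin n) ℝ :=
  shiftMat n - Matrix.vecMulVec (lastBasis n) (ctrlGain n ω)

/-- Generic companion-type matrix over ℂ. -/
noncomputable def genMat (n : ℕ) (c : Fin n → ℂ) : Matrix (Fin n) (Fin n) ℂ :=
  Matrix.of fun i j =>
    (if (i : ℕ) + 1 = (j : ℕ) then 1 else 0) - (if (i : ℕ) + 1 = n then c j else 0)

lemma genMat_det (n : ℕ) (c : Fin n → ℂ) (t : ℂ) :
    (t • (1 : Matrix (Fin n) (Fin n) ℂ) - genMat n c).det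
      = t ^ n + ∑ j : Fin n, c j * t ^ (j : ℕ) := by
  induction n with
  | zero => simp
  | succ n ih =>
    rw [Matrix.det_succ_column_zero]
    have hentry : ∀ i : Fin (n + 1),
        (t • (1 : Matrix (Fin (n+1)) (Fin (n+1)) ℂ) - genMat (n+1) c) i 0
          = (if (i : ℕ) = 0 then t else 0) + (if (i : ℕ) = n then c 0 else 0) := by
      intro i
      simp only [Matrix.sub_apply, Matrix.smul_apply, Matrix.one_apply, genMat, Matrix.of_apply,
        smul_eq_mul, Fin.val_zero]
      have e1 : (i = 0) = ((i : ℕ) = 0) := by simp only [Fin.ext_iff, Fin.val_zero]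
      have e2 : ((i : ℕ) + 1 = n + 1) = ((i : ℕ) = n) := by simp
      have e3 : ((i : ℕ) + 1 = 0) = False := by simp
      simp only [e1, e2, e3, if_false]
      split_ifs <;> ring
    have hA : ((t • (1 : Matrix (Fin (n+1)) (Fin (n+1)) ℂ) - genMat (n+1) c).submatrix
        ((0 : Fin (n+1)).succAbove) Fin.succ)
        = t • (1 : Matrix (Fin n) (Fin n) ℂ) - genMat n (fun j => c j.succ) := by
      ext i j
      simp only [Matrix.submatrix_apply, Fin.succAbove_zero, Matrix.sub_apply, Matrix.smul_apply,
        Matrix.one_apply, genMat, Matrix.of_apply, Fin.succ_inj, Fin.val_succ, smul_eq_mul]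
      norm_num
    have hB : ((t • (1 : Matrix (Fin (n+1)) (Fin (n+1)) ℂ) - genMat (n+1) c).submatrix
        ((Fin.last n).succAbove) Fin.succ).det = (-1 : ℂ) ^ n := by
      have hBT : (((t • (1 : Matrix (Fin (n+1)) (Fin (n+1)) ℂ) - genMat (n+1) c).submatrix
          ((Fin.last n).succAbove) Fin.succ)).BlockTriangular OrderDual.toDual := by
        intro i j hij
        have hij' : i < j := hij
        simp only [Matrix.submatrix_apply, Fin.succAbove_last, Matrix.sub_apply,
          Matrix.smul_apply, Matrix.one_apply, genMat, Matrix.of_apply, smul_eq_mul]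
        have h1 : ¬ (Fin.castSucc i = Fin.succ j) := by
          intro h
          have := congrArg Fin.val h
          simp only [Fin.coe_castSucc, Fin.val_succ] at this
          omega
        have h2 : ¬ ((Fin.castSucc i : ℕ) + 1 = (Fin.succ j : ℕ)) := by
          simp only [Fin.coe_castSucc, Fin.val_succ]
          omega
        have h3 : ¬ ((Fin.castSucc i : ℕ) + 1 = n + 1) := by
          simp only [Fin.coe_castSucc]
          omega
        have h4 : ¬ ((i : ℕ) = n) := Nat.ne_of_lt i.isLt
        have h5 : ¬ ((i : ℕ) = (j : ℕ)) := Nat.ne_of_lt hij'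
        simp [h1, h2, h3, h4, h5]
      rw [Matrix.det_of_lowerTriangular _ hBT]
      have : ∀ i : Fin n, ((t • (1 : Matrix (Fin (n+1)) (Fin (n+1)) ℂ) - genMat (n+1) c).submatrix
          ((Fin.last n).succAbove) Fin.succ) i i = -1 := by
        intro i
        have h1 : ¬ (Fin.castSucc i = Fin.succ i) := by
          intro h
          have := congrArg Fin.val h
          simp only [Fin.coe_castSucc, Fin.val_succ] at this
          omega
        have h3 : ¬ ((Fin.castSucc i : ℕ) + 1 = n + 1) := by
          simp only [Fin.coe_castSucc]
          omega
        have h4 : ¬ ((i : ℕ) = n) := Nat.ne_of_lt i.isLt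
        simp [Matrix.submatrix_apply, Fin.succAbove_last, Matrix.sub_apply, Matrix.smul_apply,
          Matrix.one_apply, genMat, h1, h3, h4, Fin.coe_castSucc, Fin.val_succ]
      simp only [this]
      simp [Finset.prod_const, Finset.card_univ]
    simp only [hentry]
    rw [show (∑ i : Fin (n+1), (-1 : ℂ) ^ (i : ℕ) *
        ((if (i : ℕ) = 0 then t else 0) + (if (i : ℕ) = n then c 0 else 0)) *
        ((t • (1 : Matrix (Fin (n+1)) (Fin (n+1)) ℂ) - genMat (n+1) c).submatrix
          i.succAbove Fin.succ).det)
      = (∑ i : Fin (n+1), (-1 : ℂ) ^ (i : ℕ) * (if (i : ℕ) = 0 then t else 0) *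
        ((t • (1 : Matrix (Fin (n+1)) (Fin (n+1)) ℂ) - genMat (n+1) c).submatrix
          i.succAbove Fin.succ).det)
      + (∑ i : Fin (n+1), (-1 : ℂ) ^ (i : ℕ) * (if (i : ℕ) = n then c 0 else 0) *
        ((t • (1 : Matrix (Fin (n+1)) (Fin (n+1)) ℂ) - genMat (n+1) c).submatrix
          i.succAbove Fin.succ).det) from by
        rw [← Finset.sum_add_distrib]
        exact Finset.sum_congr rfl fun i _ => by ring]
    rw [Finset.sum_eq_single (0 : Fin (n+1)) (fun b _ hb => by
        have : ¬ ((b : ℕ) = 0) := fun h => hb (Fin.ext h)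
        simp [this])
      (fun h => absurd (Finset.mem_univ _) h)]
    rw [Finset.sum_eq_single (Fin.last n) (fun b _ hb => by
        have : ¬ ((b : ℕ) = n) := fun h => hb (Fin.ext (by simpa using h))
        simp [this])
      (fun h => absurd (Finset.mem_univ _) h)]
    simp only [Fin.val_zero, Fin.val_last, if_pos, pow_zero, one_mul, hA, hB, if_true]
    rw [ih]
    rw [Fin.sum_univ_succ]
    rw [mul_add, Finset.mul_sum]
    have hsq : (-1 : ℂ) ^ n * c 0 * (-1 : ℂ) ^ n = c 0 := by
      have : ((-1 : ℂ) ^ n) * ((-1 : ℂ) ^ n) = 1 := by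
        rw [← pow_add]
        exact Even.neg_one_pow ⟨n, rfl⟩
      calc (-1 : ℂ) ^ n * c 0 * (-1 : ℂ) ^ n = ((-1 : ℂ) ^ n * (-1 : ℂ) ^ n) * c 0 := by ring
        _ = c 0 := by rw [this]; ring
    rw [hsq]
    rw [Finset.sum_congr rfl (fun (j : Fin n) (_ : j ∈ Finset.univ) =>
      show c j.succ * t ^ ((j.succ : Fin (n+1)) : ℕ) = t * (c j.succ * t ^ (j : ℕ)) from by
        rw [Fin.val_succ, pow_succ]; ring)]
    rw [pow_succ]
    simp only [Fin.val_zero, pow_zero, mul_one]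
    ring

/-- For every `ω ∈ ℝ` the spectrum over `ℂ` of the bandwidth-parametrized closed-loop
controller matrix `K(ω) = A_n − b_n·k(ω)` is exactly the singleton `{−ω}`. -/
theorem ctrl_spectrum (n : ℕ) (hn : 1 ≤ n) (ω : ℝ) :
    spectrum ℂ ((ctrlMat n ω).map (algebraMap ℝ ℂ)) = {(-(ω : ℂ))} := by
  have hEq : (ctrlMat n ω).map (algebraMap ℝ ℂ)
      = genMat n (fun j => (n.choose (j : ℕ) : ℂ) * (ω : ℂ) ^ (n - (j : ℕ))) := by
    ext i j
    have hi : (i : ℕ) < n := i.isLt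
    have e1 : ((i : ℕ) = n - 1) = ((i : ℕ) + 1 = n) := by
      apply propext; omega
    simp only [Matrix.map_apply, ctrlMat, shiftMat, lastBasis, ctrlGain, genMat,
      Matrix.sub_apply, Matrix.of_apply, Matrix.vecMulVec_apply, e1,
      Complex.coe_algebraMap]
    split_ifs <;> push_cast <;> ring
  have hdet : ∀ μ : ℂ,
      (μ • (1 : Matrix (Fin n) (Fin n) ℂ) - (ctrlMat n ω).map (algebraMap ℝ ℂ)).det
        = (μ + (ω : ℂ)) ^ n := by
    intro μ
    rw [hEq, genMat_det]
    rw [add_pow]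
    rw [Finset.sum_range_succ]
    rw [← Fin.sum_univ_eq_sum_range (fun k => μ ^ k * (ω : ℂ) ^ (n - k) * (n.choose k : ℂ)) n]
    simp only [Nat.choose_self, Nat.cast_one, Nat.sub_self, pow_zero, mul_one]
    rw [add_comm]
    congr 1
    exact Finset.sum_congr rfl fun j _ => by ring
  ext μ
  simp only [Set.mem_singleton_iff, spectrum.mem_iff, Algebra.algebraMap_eq_smul_one]
  rw [← not_iff_not, not_not, Matrix.isUnit_iff_isUnit_det, isUnit_iff_ne_zero, hdet,
    pow_ne_zero_iff (by omega : n ≠ 0)]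
  constructor
  · intro h hh
    exact h (by rw [hh]; ring)
  · intro h hh
    apply h
    linear_combination hh
end

section
/- Let n ≥ 1, A_n the n×n upper shift matrix, b_n the last standard basis vector, k_j(ω) = binom(n, j−1)·ω^{n+1−j}, and K(ω) = A_n − b_n·k(ω). There exists a constant C > 0, depending only on n, such that for all ω ≥ 1 and all t ≥ 0, the operator norm of the matrix exponential satisfies ‖exp(t·K(ω))‖ ≤ C · ω^{n−1} · e^{−ωt/2}. -/
open Matrix

lemma alt_choose_real (N : ℕ) :
    ∑ i ∈ Finset.range (N + 1), (-1 : ℝ) ^ i * (N.choose i : ℝ) =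
      if N = 0 then 1 else 0 := by
  have h := Int.alternating_sum_range_choose (n := N)
  exact_mod_cast h

lemma alt_sum (m j : ℕ) :
    ∑ l ∈ Finset.range (m + 1), (-1 : ℝ) ^ l * (m.choose l : ℝ) * (l.choose j : ℝ) =
      if j = m then (-1 : ℝ) ^ j else 0 := by
  rcases lt_or_ge m j with hj | hj
  · rw [if_neg (by omega)]
    refine Finset.sum_eq_zero fun l hl => ?_
    rw [Finset.mem_range] at hl
    rw [Nat.choose_eq_zero_of_lt (show l < j by omega)]
    simp
  · have h1 : ∑ l ∈ Finset.range (m + 1), (-1 : ℝ) ^ l * (m.choose l : ℝ) * (l.choose j : ℝ)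
        = ∑ l ∈ Finset.Ico j (m + 1), (-1 : ℝ) ^ l * (m.choose l : ℝ) * (l.choose j : ℝ) := by
      rw [Finset.range_eq_Ico]
      refine (Finset.sum_subset (Finset.Ico_subset_Ico (Nat.zero_le j) le_rfl) ?_).symm
      intro x hx hx'
      simp only [Finset.mem_Ico] at hx hx'
      rw [Nat.choose_eq_zero_of_lt (show x < j by omega)]
      simp
    rw [h1, Finset.sum_Ico_eq_sum_range]
    have h2 : m + 1 - j = (m - j) + 1 := by omega
    rw [h2]
    have h3 : ∀ k ∈ Finset.range (m - j + 1),
        (-1 : ℝ) ^ (j + k) * (m.choose (j + k) : ℝ) * ((j + k).choose j : ℝ)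
          = ((-1 : ℝ) ^ j * (m.choose j : ℝ)) * ((-1 : ℝ) ^ k * ((m - j).choose k : ℝ)) := by
      intro k hk
      rw [Finset.mem_range] at hk
      have hc : m.choose (j + k) * (j + k).choose j = m.choose j * (m - j).choose k := by
        have := Nat.choose_mul (n := m) (k := j + k) (s := j) (by omega)
        simpa using this
      have hc' : (m.choose (j + k) : ℝ) * ((j + k).choose j : ℝ)
          = (m.choose j : ℝ) * ((m - j).choose k : ℝ) := by exact_mod_cast hc
      calc (-1 : ℝ) ^ (j + k) * (m.choose (j + k) : ℝ) * ((j + k).choose j : ℝ)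
          = (-1 : ℝ) ^ j * (-1 : ℝ) ^ k *
              ((m.choose (j + k) : ℝ) * ((j + k).choose j : ℝ)) := by rw [pow_add]; ring
        _ = (-1 : ℝ) ^ j * (-1 : ℝ) ^ k * ((m.choose j : ℝ) * ((m - j).choose k : ℝ)) := by
              rw [hc']
        _ = ((-1 : ℝ) ^ j * (m.choose j : ℝ)) * ((-1 : ℝ) ^ k * ((m - j).choose k : ℝ)) := by
              ring
    rw [Finset.sum_congr rfl h3, ← Finset.mul_sum, alt_choose_real (m - j)]
    rcases eq_or_lt_of_le hj with rfl | hlt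
    · simp
    · rw [if_neg (by omega), if_neg (by omega), mul_zero]

noncomputable def pasP (n : ℕ) : Matrix (Fin n) (Fin n) ℝ :=
  Matrix.of fun i j => (-1 : ℝ) ^ ((i : ℕ) + (j : ℕ)) * ((i : ℕ).choose (j : ℕ) : ℝ)

noncomputable def pasQ (n : ℕ) : Matrix (Fin n) (Fin n) ℝ :=
  Matrix.of fun i j => ((i : ℕ).choose (j : ℕ) : ℝ)

lemma sum_if_val (n : ℕ) (f : Fin n → ℝ) (m : ℕ) :
    ∑ l : Fin n, (if m = (l : ℕ) then f l else 0) = if h : m < n then f ⟨m, h⟩ else 0 := by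
  split_ifs with h
  · rw [Finset.sum_eq_single (⟨m, h⟩ : Fin n)]
    · simp
    · intro l _ hl
      rw [if_neg]
      intro he
      exact hl (Fin.ext he.symm)
    · simp
  · refine Finset.sum_eq_zero fun l _ => ?_
    rw [if_neg]
    intro he
    exact h (he ▸ l.isLt)

lemma pasP_mul_pasQ (n : ℕ) : pasP n * pasQ n = 1 := by
  ext i j
  rw [Matrix.mul_apply]
  simp only [pasP, pasQ, Matrix.of_apply]
  have step1 : ∑ l : Fin n,
      (-1 : ℝ) ^ ((i : ℕ) + (l : ℕ)) * ((i : ℕ).choose (l : ℕ) : ℝ) * ((l : ℕ).choose (j : ℕ) : ℝ)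
      = ∑ l ∈ Finset.range n,
        (-1 : ℝ) ^ ((i : ℕ) + l) * ((i : ℕ).choose l : ℝ) * (l.choose (j : ℕ) : ℝ) :=
    Fin.sum_univ_eq_sum_range
      (fun l => (-1 : ℝ) ^ ((i : ℕ) + l) * ((i : ℕ).choose l : ℝ) * (l.choose (j : ℕ) : ℝ)) n
  rw [step1]
  have step2 : ∑ l ∈ Finset.range n,
      (-1 : ℝ) ^ ((i : ℕ) + l) * ((i : ℕ).choose l : ℝ) * (l.choose (j : ℕ) : ℝ)
      = ∑ l ∈ Finset.range ((i : ℕ) + 1),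
        (-1 : ℝ) ^ ((i : ℕ) + l) * ((i : ℕ).choose l : ℝ) * (l.choose (j : ℕ) : ℝ) := by
    refine (Finset.sum_subset (by simp [Finset.range_subset]; omega) fun x hx hx' => ?_).symm
    rw [Finset.mem_range] at hx hx'
    rw [Nat.choose_eq_zero_of_lt (show (i : ℕ) < x by omega)]
    simp
  rw [step2]
  have step3 : ∀ l ∈ Finset.range ((i : ℕ) + 1),
      (-1 : ℝ) ^ ((i : ℕ) + l) * ((i : ℕ).choose l : ℝ) * (l.choose (j : ℕ) : ℝ)
      = (-1 : ℝ) ^ (i : ℕ) * ((-1 : ℝ) ^ l * ((i : ℕ).choose l : ℝ) * (l.choose (j : ℕ) : ℝ)) := by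
    intro l _
    rw [pow_add]; ring
  rw [Finset.sum_congr rfl step3, ← Finset.mul_sum, alt_sum (i : ℕ) (j : ℕ)]
  rcases eq_or_ne i j with rfl | hij
  · rw [if_pos rfl, Matrix.one_apply_eq, ← pow_add]
    have : Even ((i : ℕ) + (i : ℕ)) := ⟨i, rfl⟩
    rw [this.neg_one_pow]
  · rw [if_neg (fun h => hij (Fin.ext h.symm)), mul_zero, Matrix.one_apply_ne hij]

lemma pasQ_mul_pasP (n : ℕ) : pasQ n * pasP n = 1 :=
  mul_eq_one_comm.mp (pasP_mul_pasQ n)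

lemma sumB (m : ℕ) (j : Fin (m + 1)) :
    ∑ l : Fin (m + 1), ((m + 1).choose (l : ℕ) : ℝ) * pasP (m + 1) l j
      = -((-1 : ℝ) ^ ((m + 1) + (j : ℕ)) * ((m + 1).choose (j : ℕ) : ℝ)) := by
  have conv : ∑ l : Fin (m + 1), ((m + 1).choose (l : ℕ) : ℝ) * pasP (m + 1) l j
      = ∑ l ∈ Finset.range (m + 1),
          ((m + 1).choose l : ℝ) * ((-1 : ℝ) ^ (l + (j : ℕ)) * (l.choose (j : ℕ) : ℝ)) := by
    refine Fin.sum_univ_eq_sum_range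
      (fun l => ((m + 1).choose l : ℝ) * ((-1 : ℝ) ^ (l + (j : ℕ)) * (l.choose (j : ℕ) : ℝ))) (m+1)
  have full := alt_sum (m + 1) (j : ℕ)
  rw [if_neg (by omega : ¬ (j : ℕ) = m + 1), Finset.sum_range_succ] at full
  have top : ((-1 : ℝ) ^ (m + 1) * ((m + 1).choose (m + 1) : ℝ) * ((m + 1).choose (j : ℕ) : ℝ))
      = (-1 : ℝ) ^ (m + 1) * ((m + 1).choose (j : ℕ) : ℝ) := by
    rw [Nat.choose_self]; push_cast; ring
  rw [top] at full
  have partial_sum : ∑ l ∈ Finset.range (m + 1),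
      (-1 : ℝ) ^ l * ((m + 1).choose l : ℝ) * (l.choose (j : ℕ) : ℝ)
      = -((-1 : ℝ) ^ (m + 1) * ((m + 1).choose (j : ℕ) : ℝ)) := by linarith
  rw [conv]
  have congr1 : ∀ l ∈ Finset.range (m + 1),
      ((m + 1).choose l : ℝ) * ((-1 : ℝ) ^ (l + (j : ℕ)) * (l.choose (j : ℕ) : ℝ))
      = (-1 : ℝ) ^ (j : ℕ) * ((-1 : ℝ) ^ l * ((m + 1).choose l : ℝ) * (l.choose (j : ℕ) : ℝ)) := by
    intro l _
    rw [pow_add]; ring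
  rw [Finset.sum_congr rfl congr1, ← Finset.mul_sum, partial_sum, pow_add]
  ring

lemma ctrl_one_mul_pasP (n : ℕ) (hn : 1 ≤ n) :
    ctrlMat n 1 * pasP n = pasP n * (shiftMat n - 1) := by
  obtain ⟨m, rfl⟩ : ∃ m, n = m + 1 := ⟨n - 1, by omega⟩
  ext i j
  rw [Matrix.mul_apply, Matrix.mul_apply]
  have lhs_split : ∀ l : Fin (m + 1), ctrlMat (m + 1) 1 i l * pasP (m + 1) l j
      = (if (i : ℕ) + 1 = (l : ℕ) then pasP (m + 1) l j else 0)
        - (if (i : ℕ) = m then ((m + 1).choose (l : ℕ) : ℝ) * pasP (m + 1) l j else 0) := by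
    intro l
    simp only [ctrlMat, shiftMat, lastBasis, ctrlGain, pasP, Matrix.sub_apply, Matrix.of_apply,
      Matrix.vecMulVec_apply, one_pow, mul_one, Nat.add_sub_cancel]
    split_ifs <;> ring
  have rhs_split : ∀ l : Fin (m + 1), pasP (m + 1) i l * (shiftMat (m + 1) - 1) l j
      = (if (l : ℕ) + 1 = (j : ℕ) then pasP (m + 1) i l else 0)
        - (if l = j then pasP (m + 1) i l else 0) := by
    intro l
    simp only [pasP, shiftMat, Matrix.sub_apply, Matrix.of_apply, Matrix.one_apply]
    split_ifs <;> ring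
  rw [Finset.sum_congr rfl fun l _ => lhs_split l,
      Finset.sum_congr rfl fun l _ => rhs_split l,
      Finset.sum_sub_distrib, Finset.sum_sub_distrib]
  -- T4
  have T4 : ∑ l : Fin (m + 1), (if l = j then pasP (m + 1) i l else 0) = pasP (m + 1) i j := by
    simp
  rw [T4]
  -- T1
  have T1 : ∑ l : Fin (m + 1), (if (i : ℕ) + 1 = (l : ℕ) then pasP (m + 1) l j else 0)
      = if h : (i : ℕ) + 1 < m + 1 then pasP (m + 1) ⟨(i : ℕ) + 1, h⟩ j else 0 :=
    sum_if_val (m + 1) (fun l => pasP (m + 1) l j) ((i : ℕ) + 1)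
  rw [T1]
  -- T3
  have T3 : ∑ l : Fin (m + 1), (if (l : ℕ) + 1 = (j : ℕ) then pasP (m + 1) i l else 0)
      = if h : (j : ℕ) - 1 < m + 1 ∧ 1 ≤ (j : ℕ) then pasP (m + 1) i ⟨(j : ℕ) - 1, h.1⟩ else 0 := by
    rcases Nat.eq_zero_or_pos (j : ℕ) with hj | hj
    · rw [dif_neg (by omega)]
      refine Finset.sum_eq_zero fun l _ => if_neg (by omega)
    · rw [dif_pos ⟨by omega, hj⟩]
      have : ∀ l : Fin (m + 1), ((l : ℕ) + 1 = (j : ℕ)) = ((j : ℕ) - 1 = (l : ℕ)) := by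
        intro l; simp only [eq_iff_iff]; omega
      simp only [this]
      rw [sum_if_val (m + 1) (fun l => pasP (m + 1) i l) ((j : ℕ) - 1),
        dif_pos (by omega : (j : ℕ) - 1 < m + 1)]
  rw [T3]
  -- case analysis
  by_cases hi : (i : ℕ) = m
  · -- last row
    simp only [if_pos hi]
    rw [dif_neg (by omega), sumB m j]
    obtain ⟨jv, hjv⟩ := j
    rcases jv with _ | jj
    · rw [dif_neg (by simp)]
      simp only [pasP, Matrix.of_apply, hi]
      rw [Nat.choose_zero_right, Nat.choose_zero_right]
      push_cast
      ring
    · rw [dif_pos (show ((⟨jj + 1, hjv⟩ : Fin (m + 1)) : ℕ) - 1 < m + 1 ∧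
          1 ≤ ((⟨jj + 1, hjv⟩ : Fin (m + 1)) : ℕ) from ⟨by simp; omega, by simp⟩)]
      simp only [pasP, Matrix.of_apply, hi, Fin.val_mk, Nat.add_sub_cancel]
      have e1 : (m + 1).choose (jj + 1) = m.choose jj + m.choose (jj + 1) :=
        Nat.choose_succ_succ m jj
      rw [e1]
      push_cast
      ring
  · -- interior row
    have hi' : (i : ℕ) + 1 < m + 1 := by have := i.isLt; omega
    simp only [if_neg hi]
    rw [dif_pos hi', Finset.sum_const_zero, sub_zero]
    obtain ⟨jv, hjv⟩ := j
    rcases jv with _ | jj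
    · rw [dif_neg (by simp)]
      simp only [pasP, Matrix.of_apply]
      rw [Nat.choose_zero_right, Nat.choose_zero_right]
      push_cast
      ring
    · rw [dif_pos (show ((⟨jj + 1, hjv⟩ : Fin (m + 1)) : ℕ) - 1 < m + 1 ∧
          1 ≤ ((⟨jj + 1, hjv⟩ : Fin (m + 1)) : ℕ) from ⟨by simp; omega, by simp⟩)]
      simp only [pasP, Matrix.of_apply, Fin.val_mk, Nat.add_sub_cancel]
      have e1 : ((i : ℕ) + 1).choose (jj + 1) = (i : ℕ).choose jj + (i : ℕ).choose (jj + 1) :=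
        Nat.choose_succ_succ (i : ℕ) jj
      rw [e1]
      push_cast
      ring

noncomputable def dmat (n : ℕ) (ω : ℝ) : Matrix (Fin n) (Fin n) ℝ :=
  Matrix.diagonal fun i => ω ^ (i : ℕ)

noncomputable def dmatInv (n : ℕ) (ω : ℝ) : Matrix (Fin n) (Fin n) ℝ :=
  Matrix.diagonal fun i => (ω ^ (i : ℕ))⁻¹

lemma dmat_mul_dmatInv (n : ℕ) {ω : ℝ} (hω : ω ≠ 0) : dmat n ω * dmatInv n ω = 1 := by
  rw [dmat, dmatInv, Matrix.diagonal_mul_diagonal]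
  have : (fun i : Fin n => ω ^ (i : ℕ) * (ω ^ (i : ℕ))⁻¹) = fun _ => (1 : ℝ) :=
    funext fun i => mul_inv_cancel₀ (pow_ne_zero _ hω)
  rw [this, Matrix.diagonal_one]

lemma dmatInv_mul_dmat (n : ℕ) {ω : ℝ} (hω : ω ≠ 0) : dmatInv n ω * dmat n ω = 1 := by
  rw [dmat, dmatInv, Matrix.diagonal_mul_diagonal]
  have : (fun i : Fin n => (ω ^ (i : ℕ))⁻¹ * ω ^ (i : ℕ)) = fun _ => (1 : ℝ) :=
    funext fun i => inv_mul_cancel₀ (pow_ne_zero _ hω)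
  rw [this, Matrix.diagonal_one]

lemma ctrl_scale (n : ℕ) {ω : ℝ} (hω : 0 < ω) :
    ctrlMat n ω = dmat n ω * (ω • ctrlMat n 1) * dmatInv n ω := by
  ext i j
  rw [dmat, dmatInv, Matrix.mul_diagonal, Matrix.diagonal_mul, Matrix.smul_apply]
  simp only [ctrlMat, shiftMat, lastBasis, ctrlGain, Matrix.sub_apply, Matrix.of_apply,
    Matrix.vecMulVec_apply, one_pow, mul_one, smul_eq_mul]
  have key1 : (if (i : ℕ) + 1 = (j : ℕ) then (1:ℝ) else 0)
      = ω ^ (i : ℕ) * (ω * (if (i : ℕ) + 1 = (j : ℕ) then (1:ℝ) else 0)) * (ω ^ (j : ℕ))⁻¹ := by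
    split_ifs with h
    · rw [mul_one, ← pow_succ, h, mul_inv_cancel₀ (pow_ne_zero _ hω.ne')]
    · ring
  have key2 : (if (i : ℕ) = n - 1 then (1:ℝ) else 0) * ((n.choose (j : ℕ) : ℝ) * ω ^ (n - (j : ℕ)))
      = ω ^ (i : ℕ) * (ω * ((if (i : ℕ) = n - 1 then (1:ℝ) else 0) * (n.choose (j : ℕ) : ℝ)))
          * (ω ^ (j : ℕ))⁻¹ := by
    split_ifs with h
    · have hj := j.isLt
      have hi := i.isLt
      have e1 : ω ^ (i : ℕ) * ω = ω ^ n := by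
        rw [← pow_succ]; congr 1; omega
      have e2 : ω ^ (n - (j : ℕ)) * ω ^ (j : ℕ) = ω ^ n := by
        rw [← pow_add]; congr 1; omega
      have e3 : ω ^ (n - (j : ℕ)) = ω ^ n * (ω ^ (j : ℕ))⁻¹ := by
        rw [eq_mul_inv_iff_mul_eq₀ (pow_ne_zero _ hω.ne')]
        exact e2
      rw [one_mul, e3, ← e1]
      ring
    · ring
  calc (if (i : ℕ) + 1 = (j : ℕ) then (1:ℝ) else 0)
        - (if (i : ℕ) = n - 1 then (1:ℝ) else 0) * ((n.choose (j : ℕ) : ℝ) * ω ^ (n - (j : ℕ)))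
      = ω ^ (i : ℕ) * (ω * (if (i : ℕ) + 1 = (j : ℕ) then (1:ℝ) else 0)) * (ω ^ (j : ℕ))⁻¹
        - ω ^ (i : ℕ) * (ω * ((if (i : ℕ) = n - 1 then (1:ℝ) else 0) * (n.choose (j : ℕ) : ℝ)))
            * (ω ^ (j : ℕ))⁻¹ := by rw [← key1, ← key2]
    _ = ω ^ (i : ℕ)
          * (ω * ((if (i : ℕ) + 1 = (j : ℕ) then (1:ℝ) else 0)
              - (if (i : ℕ) = n - 1 then (1:ℝ) else 0) * (n.choose (j : ℕ) : ℝ)))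
          * (ω ^ (j : ℕ))⁻¹ := by ring

lemma shift_pow (n k : ℕ) :
    (shiftMat n) ^ k = Matrix.of fun i j : Fin n => if (i : ℕ) + k = (j : ℕ) then 1 else 0 := by
  induction k with
  | zero =>
    ext i j
    simp only [pow_zero, Matrix.of_apply, Nat.add_zero, Matrix.one_apply, Fin.ext_iff]
  | succ k ih =>
    rw [pow_succ, ih]
    ext i j
    rw [Matrix.mul_apply]
    simp only [Matrix.of_apply, shiftMat]
    have hsplit : ∀ l : Fin n,
        (if (i : ℕ) + k = (l : ℕ) then (1:ℝ) else 0) * (if (l : ℕ) + 1 = (j : ℕ) then (1:ℝ) else 0)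
        = if (i : ℕ) + k = (l : ℕ) then (if (l : ℕ) + 1 = (j : ℕ) then (1:ℝ) else 0) else 0 := by
      intro l
      split_ifs <;> simp
    rw [Finset.sum_congr rfl fun l _ => hsplit l,
      sum_if_val n (fun l => if (l : ℕ) + 1 = (j : ℕ) then (1:ℝ) else 0) ((i : ℕ) + k)]
    have hj := j.isLt
    simp only [Fin.val_mk]
    split_ifs <;> first | rfl | omega

lemma shift_pow_eq_zero (n k : ℕ) (hk : n ≤ k) : (shiftMat n) ^ k = 0 := by
  rw [shift_pow]
  ext i j
  have hj := j.isLt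
  simp only [Matrix.of_apply, Matrix.zero_apply]
  rw [if_neg]
  omega

lemma exp_shift (n : ℕ) (s : ℝ) :
    NormedSpace.exp (s • shiftMat n)
      = ∑ k ∈ Finset.range n, (s ^ k * ((k.factorial : ℝ))⁻¹) • (shiftMat n) ^ k := by
  letI : SeminormedRing (Matrix (Fin n) (Fin n) ℝ) := Matrix.linftyOpSemiNormedRing
  letI : NormedRing (Matrix (Fin n) (Fin n) ℝ) := Matrix.linftyOpNormedRing
  letI : NormedAlgebra ℝ (Matrix (Fin n) (Fin n) ℝ) := Matrix.linftyOpNormedAlgebra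
  rw [congrFun (NormedSpace.exp_eq_tsum (𝕂 := ℝ)) (s • shiftMat n)]
  rw [tsum_eq_sum (s := Finset.range n) ?_]
  · refine Finset.sum_congr rfl fun k _ => ?_
    rw [smul_pow, smul_smul, mul_comm]
  · intro k hk
    rw [Finset.mem_range, not_lt] at hk
    rw [smul_pow, shift_pow_eq_zero n k hk]
    simp

lemma exp_smul_one_mat (n : ℕ) (c : ℝ) :
    NormedSpace.exp (c • (1 : Matrix (Fin n) (Fin n) ℝ)) = Real.exp c • 1 := by
  letI : SeminormedRing (Matrix (Fin n) (Fin n) ℝ) := Matrix.linftyOpSemiNormedRing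
  letI : NormedRing (Matrix (Fin n) (Fin n) ℝ) := Matrix.linftyOpNormedRing
  letI : NormedAlgebra ℝ (Matrix (Fin n) (Fin n) ℝ) := Matrix.linftyOpNormedAlgebra
  rw [← Algebra.algebraMap_eq_smul_one]
  erw [← NormedSpace.algebraMap_exp_comm]
  rw [Algebra.algebraMap_eq_smul_one, Real.exp_eq_exp_ℝ]

lemma exp_shift_sub_one (n : ℕ) (s : ℝ) :
    NormedSpace.exp (s • (shiftMat n - 1))
      = Real.exp (-s) • NormedSpace.exp (s • shiftMat n) := by
  have h : s • (shiftMat n - 1) = s • shiftMat n + (-s) • (1 : Matrix (Fin n) (Fin n) ℝ) := by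
    rw [smul_sub, neg_smul]
    abel
  rw [h, Matrix.exp_add_of_commute _ _ ((Commute.one_right (s • shiftMat n)).smul_right (-s)),
    exp_smul_one_mat, mul_smul_comm, mul_one]

set_option maxHeartbeats 1600000 in
set_option synthInstance.maxHeartbeats 400000 in
/-- There is a constant `C > 0` depending only on `n` such that for all `ω ≥ 1` and `t ≥ 0`
the (Euclidean) operator norm of the closed-loop semigroup satisfies
`‖exp(t·K(ω))‖ ≤ C·ω^{n−1}·e^{−ωt/2}`. -/
theorem ctrl_exp_norm_bound (n : ℕ) (hn : 1 ≤ n) :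
    ∃ C : ℝ, 0 < C ∧ ∀ ω : ℝ, 1 ≤ ω → ∀ t : ℝ, 0 ≤ t →
      ‖Matrix.toEuclideanCLM (𝕜 := ℝ) (NormedSpace.exp (t • ctrlMat n ω))‖ ≤
        C * ω ^ (n - 1) * Real.exp (-(ω * t) / 2) := by
  classical
  set c1 : ℝ := ‖Matrix.toEuclideanCLM (𝕜 := ℝ) (1 : Matrix (Fin n) (Fin n) ℝ)‖ with hc1
  set B : ℝ := ‖Matrix.toEuclideanCLM (𝕜 := ℝ) (shiftMat n)‖ with hB
  set cP : ℝ := ‖Matrix.toEuclideanCLM (𝕜 := ℝ) (pasP n)‖ with hcP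
  set cQ : ℝ := ‖Matrix.toEuclideanCLM (𝕜 := ℝ) (pasQ n)‖ with hcQ
  set cD : ℝ := ∑ i : Fin n,
    ‖Matrix.toEuclideanCLM (𝕜 := ℝ) (Matrix.single i i (1 : ℝ))‖ with hcD
  have hc10 : 0 ≤ c1 := hc1 ▸ norm_nonneg _
  have hB0 : 0 ≤ B := hB ▸ norm_nonneg _
  have hcP0 : 0 ≤ cP := hcP ▸ norm_nonneg _
  have hcQ0 : 0 ≤ cQ := hcQ ▸ norm_nonneg _
  have hcD0 : 0 ≤ cD := hcD ▸ Finset.sum_nonneg fun i _ => norm_nonneg _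
  have hn0 : (0 : ℝ) < (n : ℝ) := by exact_mod_cast hn
  have hCpos : (0 : ℝ) < (1 + (n : ℝ)) * (1 + c1) * (1 + B) ^ n * (1 + 2 * (n : ℝ)) ^ n
      * (1 + cD) ^ 2 * (1 + cP) * (1 + cQ) := by
    refine mul_pos (mul_pos (mul_pos (mul_pos (mul_pos (mul_pos (by linarith) (by linarith))
      (pow_pos (by linarith) n)) (pow_pos (by linarith) n)) (pow_pos (by linarith) 2))
      (by linarith)) (by linarith)
  refine ⟨(1 + (n : ℝ)) * (1 + c1) * (1 + B) ^ n * (1 + 2 * (n : ℝ)) ^ n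
      * (1 + cD) ^ 2 * (1 + cP) * (1 + cQ), hCpos, ?_⟩
  intro ω hω t ht
  have hω0 : (0 : ℝ) < ω := lt_of_lt_of_le one_pos hω
  have hs : 0 ≤ t * ω := mul_nonneg ht hω0.le
  -- units
  have hPQ := pasP_mul_pasQ n
  have hQP := pasQ_mul_pasP n
  have hDD : dmat n ω * dmatInv n ω = 1 := dmat_mul_dmatInv n hω0.ne'
  have hDD' : dmatInv n ω * dmat n ω = 1 := dmatInv_mul_dmat n hω0.ne'
  set U : (Matrix (Fin n) (Fin n) ℝ)ˣ :=
    ⟨dmat n ω * pasP n, pasQ n * dmatInv n ω,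
      by rw [Matrix.mul_assoc, ← Matrix.mul_assoc (pasP n), hPQ, Matrix.one_mul, hDD],
      by rw [Matrix.mul_assoc, ← Matrix.mul_assoc (dmatInv n ω), hDD', Matrix.one_mul, hQP]⟩
    with hU
  have hUval : (U : Matrix (Fin n) (Fin n) ℝ) = dmat n ω * pasP n := rfl
  have hUinv : ((U⁻¹ : (Matrix (Fin n) (Fin n) ℝ)ˣ) : Matrix (Fin n) (Fin n) ℝ)
      = pasQ n * dmatInv n ω := rfl
  have hctrl1 : ctrlMat n 1 = pasP n * (shiftMat n - 1) * pasQ n := by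
    calc ctrlMat n 1 = ctrlMat n 1 * (pasP n * pasQ n) := by rw [hPQ, Matrix.mul_one]
      _ = ctrlMat n 1 * pasP n * pasQ n := by rw [Matrix.mul_assoc]
      _ = pasP n * (shiftMat n - 1) * pasQ n := by rw [ctrl_one_mul_pasP n hn]
  have hKey : t • ctrlMat n ω
      = (U : Matrix (Fin n) (Fin n) ℝ) * ((t * ω) • (shiftMat n - 1))
          * ((U⁻¹ : (Matrix (Fin n) (Fin n) ℝ)ˣ) : Matrix (Fin n) (Fin n) ℝ) := by
    rw [hUval, hUinv, ctrl_scale n hω0, hctrl1]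
    simp only [Matrix.mul_smul, Matrix.smul_mul, smul_smul, Matrix.mul_assoc]
  have hexp : NormedSpace.exp (t • ctrlMat n ω)
      = (U : Matrix (Fin n) (Fin n) ℝ)
          * (Real.exp (-(t * ω)) • NormedSpace.exp ((t * ω) • shiftMat n))
          * ((U⁻¹ : (Matrix (Fin n) (Fin n) ℝ)ˣ) : Matrix (Fin n) (Fin n) ℝ) := by
    rw [hKey, Matrix.exp_units_conj, exp_shift_sub_one]
  -- norm bound for diagonal matrices
  have hdiag : ∀ (v : Fin n → ℝ) (c : ℝ), 0 ≤ c → (∀ i, |v i| ≤ c) →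
      ‖Matrix.toEuclideanCLM (𝕜 := ℝ) (Matrix.diagonal v)‖ ≤ c * cD := by
    intro v c hc hv
    have hrep : Matrix.diagonal v = ∑ i : Fin n, v i • Matrix.single i i (1 : ℝ) := by
      ext a b
      simp only [Matrix.sum_apply, Matrix.smul_apply, Matrix.single, Matrix.of_apply,
        smul_eq_mul, Matrix.diagonal_apply]
      rcases eq_or_ne a b with rfl | hab
      · rw [if_pos rfl, Finset.sum_eq_single a]
        · simp
        · intro l _ hl
          rw [if_neg (by tauto), mul_zero]
        · simp
      · rw [if_neg hab]
        refine (Finset.sum_eq_zero fun l _ => ?_).symm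
        rw [if_neg (by rintro ⟨rfl, rfl⟩; exact hab rfl), mul_zero]
    rw [hrep, _root_.map_sum]
    refine (norm_sum_le _ _).trans ?_
    rw [hcD, Finset.mul_sum]
    refine Finset.sum_le_sum fun i _ => ?_
    rw [_root_.map_smul]
    rw [norm_smul (v i) (Matrix.toEuclideanCLM (𝕜 := ℝ) (Matrix.single i i (1 : ℝ))),
      Real.norm_eq_abs]
    exact mul_le_mul_of_nonneg_right (hv i) (norm_nonneg _)
  have hD : ‖Matrix.toEuclideanCLM (𝕜 := ℝ) (dmat n ω)‖ ≤ ω ^ (n - 1) * (1 + cD) := by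
    refine (hdiag _ (ω ^ (n - 1)) (pow_nonneg hω0.le _) fun i => ?_).trans ?_
    · rw [abs_of_nonneg (pow_nonneg hω0.le _)]
      exact pow_le_pow_right₀ hω (by have := i.isLt; omega)
    · exact mul_le_mul_of_nonneg_left (by linarith) (pow_nonneg hω0.le _)
  have hDinv : ‖Matrix.toEuclideanCLM (𝕜 := ℝ) (dmatInv n ω)‖ ≤ 1 + cD := by
    refine (hdiag _ 1 one_pos.le fun i => ?_).trans (by linarith)
    rw [abs_of_nonneg (inv_nonneg.mpr (pow_nonneg hω0.le _))]
    exact inv_le_one_of_one_le₀ (one_le_pow₀ hω)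
  -- powers of the shift through φ
  have hpow : ∀ k : ℕ, ‖Matrix.toEuclideanCLM (𝕜 := ℝ) ((shiftMat n) ^ k)‖
      ≤ (1 + c1) * (1 + B) ^ k := by
    intro k
    induction k with
    | zero =>
      have h0 : 0 ≤ ‖Matrix.toEuclideanCLM (𝕜 := ℝ) (1 : Matrix (Fin n) (Fin n) ℝ)‖ :=
        norm_nonneg _
      rw [pow_zero, pow_zero, mul_one, ← hc1]
      linarith
    | succ k ih =>
      rw [pow_succ, _root_.map_mul]
      refine (norm_mul_le _ _).trans ?_
      rw [pow_succ]
      calc ‖Matrix.toEuclideanCLM (𝕜 := ℝ) ((shiftMat n) ^ k)‖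
            * ‖Matrix.toEuclideanCLM (𝕜 := ℝ) (shiftMat n)‖
          ≤ ((1 + c1) * (1 + B) ^ k) * (1 + B) := by
            refine mul_le_mul ih (by rw [← hB]; linarith) (norm_nonneg _)
              (mul_nonneg (by linarith) (pow_nonneg (by linarith) _))
        _ = (1 + c1) * ((1 + B) ^ k * (1 + B)) := by ring
  -- the exponential of the scaled shift
  have hexpS : ‖Matrix.toEuclideanCLM (𝕜 := ℝ) (NormedSpace.exp ((t * ω) • shiftMat n))‖
      ≤ (1 + (n : ℝ)) * (1 + c1) * (1 + B) ^ n * (1 + t * ω) ^ n := by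
    rw [exp_shift n (t * ω), _root_.map_sum]
    refine (norm_sum_le _ _).trans ?_
    have hterm : ∀ k ∈ Finset.range n,
        ‖Matrix.toEuclideanCLM (𝕜 := ℝ) ((((t * ω) ^ k * ((k.factorial : ℝ))⁻¹) • (shiftMat n) ^ k
            : Matrix (Fin n) (Fin n) ℝ))‖
          ≤ (1 + t * ω) ^ n * ((1 + c1) * (1 + B) ^ n) := by
      intro k hk
      rw [Finset.mem_range] at hk
      rw [_root_.map_smul]
      rw [norm_smul ((t * ω) ^ k * ((k.factorial : ℝ))⁻¹)
        (Matrix.toEuclideanCLM (𝕜 := ℝ) ((shiftMat n) ^ k)), Real.norm_eq_abs]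
      have h1 : |(t * ω) ^ k * ((k.factorial : ℝ))⁻¹| ≤ (1 + t * ω) ^ n := by
        rw [abs_of_nonneg (mul_nonneg (pow_nonneg hs _)
          (inv_nonneg.mpr (Nat.cast_nonneg _)))]
        have hfac : ((k.factorial : ℝ))⁻¹ ≤ 1 :=
          inv_le_one_of_one_le₀ (by exact_mod_cast k.factorial_pos)
        calc (t * ω) ^ k * ((k.factorial : ℝ))⁻¹ ≤ (t * ω) ^ k * 1 :=
              mul_le_mul_of_nonneg_left hfac (pow_nonneg hs _)
          _ = (t * ω) ^ k := mul_one _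
          _ ≤ (1 + t * ω) ^ k := pow_le_pow_left₀ hs (by linarith) _
          _ ≤ (1 + t * ω) ^ n := pow_le_pow_right₀ (by linarith) hk.le
      have h2 : ‖Matrix.toEuclideanCLM (𝕜 := ℝ) ((shiftMat n) ^ k)‖
          ≤ (1 + c1) * (1 + B) ^ n := by
        refine (hpow k).trans ?_
        exact mul_le_mul_of_nonneg_left
          (pow_le_pow_right₀ (by linarith) hk.le) (by linarith)
      exact mul_le_mul h1 h2 (norm_nonneg _) (pow_nonneg (by linarith) _)
    refine (Finset.sum_le_sum hterm).trans ?_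
    rw [Finset.sum_const, Finset.card_range, nsmul_eq_mul]
    have hn1 : (n : ℝ) ≤ 1 + (n : ℝ) := by linarith
    calc (n : ℝ) * ((1 + t * ω) ^ n * ((1 + c1) * (1 + B) ^ n))
        ≤ (1 + (n : ℝ)) * ((1 + t * ω) ^ n * ((1 + c1) * (1 + B) ^ n)) :=
          mul_le_mul_of_nonneg_right hn1 (mul_nonneg (pow_nonneg (by linarith) _)
            (mul_nonneg (by linarith) (pow_nonneg (by linarith) _)))
      _ = (1 + (n : ℝ)) * (1 + c1) * (1 + B) ^ n * (1 + t * ω) ^ n := by ring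
  -- polynomial growth dominated by exponential
  have hgrow : (1 + t * ω) ^ n ≤ (1 + 2 * (n : ℝ)) ^ n * Real.exp ((t * ω) / 2) := by
    have hstep : 1 + t * ω ≤ (1 + 2 * (n : ℝ)) * Real.exp ((t * ω) / (2 * (n : ℝ))) := by
      have hexp1 := Real.add_one_le_exp ((t * ω) / (2 * (n : ℝ)))
      have hfrac : 0 ≤ (t * ω) / (2 * (n : ℝ)) := div_nonneg hs (by linarith)
      have hprod : (1 + 2 * (n : ℝ)) * ((t * ω) / (2 * (n : ℝ)) + 1)
          = (t * ω) / (2 * (n : ℝ)) + (t * ω) + 1 + 2 * (n : ℝ) := by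
        field_simp
        ring
      nlinarith [Real.exp_pos ((t * ω) / (2 * (n : ℝ)))]
    calc (1 + t * ω) ^ n ≤ ((1 + 2 * (n : ℝ)) * Real.exp ((t * ω) / (2 * (n : ℝ)))) ^ n :=
          pow_le_pow_left₀ (by linarith) hstep n
      _ = (1 + 2 * (n : ℝ)) ^ n * Real.exp ((t * ω) / (2 * (n : ℝ))) ^ n := by rw [mul_pow]
      _ = (1 + 2 * (n : ℝ)) ^ n * Real.exp ((t * ω) / 2) := by
          rw [← Real.exp_nat_mul]
          congr 1
          field_simp
  -- the middle factor
  have hX : ‖Matrix.toEuclideanCLM (𝕜 := ℝ)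
        (Real.exp (-(t * ω)) • NormedSpace.exp ((t * ω) • shiftMat n))‖
      ≤ (1 + (n : ℝ)) * (1 + c1) * (1 + B) ^ n * (1 + 2 * (n : ℝ)) ^ n
          * Real.exp (-(ω * t) / 2) := by
    rw [_root_.map_smul]
    rw [norm_smul (Real.exp (-(t * ω)))
      (Matrix.toEuclideanCLM (𝕜 := ℝ) (NormedSpace.exp ((t * ω) • shiftMat n))),
      Real.norm_eq_abs, Real.abs_exp]
    calc Real.exp (-(t * ω))
          * ‖Matrix.toEuclideanCLM (𝕜 := ℝ) (NormedSpace.exp ((t * ω) • shiftMat n))‖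
        ≤ Real.exp (-(t * ω))
            * ((1 + (n : ℝ)) * (1 + c1) * (1 + B) ^ n * (1 + t * ω) ^ n) :=
          mul_le_mul_of_nonneg_left hexpS (Real.exp_pos _).le
      _ ≤ Real.exp (-(t * ω)) * ((1 + (n : ℝ)) * (1 + c1) * (1 + B) ^ n
            * ((1 + 2 * (n : ℝ)) ^ n * Real.exp ((t * ω) / 2))) := by
          refine mul_le_mul_of_nonneg_left ?_ (Real.exp_pos _).le
          refine mul_le_mul_of_nonneg_left hgrow (mul_nonneg (mul_nonneg
            (by linarith) (by linarith)) (pow_nonneg (by linarith) _))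
      _ = (1 + (n : ℝ)) * (1 + c1) * (1 + B) ^ n * (1 + 2 * (n : ℝ)) ^ n
            * (Real.exp (-(t * ω)) * Real.exp ((t * ω) / 2)) := by ring
      _ = (1 + (n : ℝ)) * (1 + c1) * (1 + B) ^ n * (1 + 2 * (n : ℝ)) ^ n
            * Real.exp (-(ω * t) / 2) := by
          rw [← Real.exp_add]
          congr 1
          ring
  -- bounds for the conjugating factors
  have hUv : ‖Matrix.toEuclideanCLM (𝕜 := ℝ) ((U : Matrix (Fin n) (Fin n) ℝ))‖
      ≤ ω ^ (n - 1) * ((1 + cD) * (1 + cP)) := by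
    rw [hUval, _root_.map_mul]
    refine (norm_mul_le _ _).trans ?_
    calc ‖Matrix.toEuclideanCLM (𝕜 := ℝ) (dmat n ω)‖
          * ‖Matrix.toEuclideanCLM (𝕜 := ℝ) (pasP n)‖
        ≤ (ω ^ (n - 1) * (1 + cD)) * (1 + cP) := by
          refine mul_le_mul hD (by rw [← hcP]; linarith) (norm_nonneg _)
            (mul_nonneg (pow_nonneg hω0.le _) (by linarith))
      _ = ω ^ (n - 1) * ((1 + cD) * (1 + cP)) := by ring
  have hUi : ‖Matrix.toEuclideanCLM (𝕜 := ℝ)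
        (((U⁻¹ : (Matrix (Fin n) (Fin n) ℝ)ˣ) : Matrix (Fin n) (Fin n) ℝ))‖
      ≤ (1 + cQ) * (1 + cD) := by
    rw [hUinv, _root_.map_mul]
    refine (norm_mul_le _ _).trans ?_
    exact mul_le_mul (by rw [← hcQ]; linarith) hDinv (norm_nonneg _) (by linarith)
  -- assemble
  rw [hexp, _root_.map_mul, _root_.map_mul]
  refine ((norm_mul_le _ _).trans
    (mul_le_mul_of_nonneg_right (norm_mul_le _ _) (norm_nonneg _))).trans ?_
  calc ‖Matrix.toEuclideanCLM (𝕜 := ℝ) ((U : Matrix (Fin n) (Fin n) ℝ))‖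
        * ‖Matrix.toEuclideanCLM (𝕜 := ℝ)
            (Real.exp (-(t * ω)) • NormedSpace.exp ((t * ω) • shiftMat n))‖
        * ‖Matrix.toEuclideanCLM (𝕜 := ℝ)
            (((U⁻¹ : (Matrix (Fin n) (Fin n) ℝ)ˣ) : Matrix (Fin n) (Fin n) ℝ))‖
      ≤ (ω ^ (n - 1) * ((1 + cD) * (1 + cP)))
          * ((1 + (n : ℝ)) * (1 + c1) * (1 + B) ^ n * (1 + 2 * (n : ℝ)) ^ n
              * Real.exp (-(ω * t) / 2))
          * ((1 + cQ) * (1 + cD)) := by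
        refine mul_le_mul (mul_le_mul hUv hX (norm_nonneg _)
            (mul_nonneg (pow_nonneg hω0.le _) (mul_nonneg (by linarith) (by linarith))))
          hUi (norm_nonneg _) ?_
        refine mul_nonneg (mul_nonneg (pow_nonneg hω0.le _)
          (mul_nonneg (by linarith) (by linarith))) ?_
        refine mul_nonneg (mul_nonneg (mul_nonneg (mul_nonneg (by linarith) (by linarith))
          (pow_nonneg (by linarith) _)) (pow_nonneg (by linarith) _)) (Real.exp_pos _).le
    _ = (1 + (n : ℝ)) * (1 + c1) * (1 + B) ^ n * (1 + 2 * (n : ℝ)) ^ n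
          * (1 + cD) ^ 2 * (1 + cP) * (1 + cQ) * ω ^ (n - 1)
          * Real.exp (-(ω * t) / 2) := by ring
end

section
/- (Lemma 2: input-to-state stability of the control error subsystem.) Let n ≥ 1, let A_n be the n×n upper shift matrix and b_n the last standard basis vector, and for ω_c > 1 let k ∈ ℝ^n have entries k_j = binom(n, j−1)·ω_c^{n+1−j} (the bandwidth parametrization placing all closed-loop eigenvalues at −ω_c), and set κ = (k, 1) ∈ ℝ^{n+1}. Then there exist constants c₅, c₆, c₇ > 0 such that for every differentiable function e : ℝ → ℝ^n and every bounded function z̃ : ℝ → ℝ^{n+1} with sup_{t≥0} ‖z̃(t)‖ = S < ∞, satisfying for all t ≥ 0 the perturbed closed-loop dynamics e′(t) = (A_n − b_n·k^⊤)·e(t) + ⟨κ, z̃(t)⟩·b_n, the following bound holds for all t ≥ 0: ‖e(t)‖ ≤ ω_c^{n−1}·c₅·‖e(0)‖·exp(−c₆·ω_c·t) + ω_c^{n−2}·c₇·S, where ‖·‖ denotes the Euclidean norm. -/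
open Matrix

lemma scalar_decay_upper {ωc A B : ℝ} (hω : 1 < ωc) (hA : 0 ≤ A) (hB : 0 ≤ B)
    {z g : ℝ → ℝ}
    (hz : ∀ t, 0 ≤ t → HasDerivAt z (-ωc * z t + g t) t)
    (hg : ∀ t, 0 ≤ t → g t ≤ A * Real.exp (-t) + B) :
    ∀ t, 0 ≤ t → z t ≤ (|z 0| + A / (ωc - 1)) * Real.exp (-t) + B / ωc := by
  have hω0 : 0 < ωc := lt_trans one_pos hω
  have hω1 : 0 < ωc - 1 := by linarith
  set φ : ℝ → ℝ := fun t =>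
    Real.exp (ωc * t) * z t - A / (ωc - 1) * Real.exp ((ωc - 1) * t)
      - B / ωc * Real.exp (ωc * t) with hφ
  have hφd : ∀ t, 0 ≤ t → HasDerivAt φ
      (Real.exp (ωc * t) * (g t - A * Real.exp (-t) - B)) t := by
    intro t ht
    have h1 : HasDerivAt (fun s => Real.exp (ωc * s)) (ωc * Real.exp (ωc * t)) t := by
      simpa [mul_comm] using ((hasDerivAt_id t).const_mul ωc).exp
    have h2 : HasDerivAt (fun s => Real.exp ((ωc - 1) * s)) ((ωc - 1) * Real.exp ((ωc - 1) * t)) t := by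
      simpa [mul_comm] using ((hasDerivAt_id t).const_mul (ωc - 1)).exp
    have hd := (h1.mul (hz t ht)).sub
      ((h2.const_mul (A / (ωc - 1))).add (h1.const_mul (B / ωc)))
    have heq : ωc * Real.exp (ωc * t) * z t + Real.exp (ωc * t) * (-ωc * z t + g t)
        - (A / (ωc - 1) * ((ωc - 1) * Real.exp ((ωc - 1) * t)) + B / ωc * (ωc * Real.exp (ωc * t)))
        = Real.exp (ωc * t) * (g t - A * Real.exp (-t) - B) := by
      have e2 : Real.exp (ωc * t) * Real.exp (-t) = Real.exp ((ωc - 1) * t) := by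
        rw [← Real.exp_add]; ring_nf
      rw [← e2]
      field_simp
      ring
    rw [heq] at hd
    exact hd.congr_of_eventuallyEq (Filter.Eventually.of_forall fun s => by
      simp only [hφ, Pi.sub_apply, Pi.add_apply, Pi.mul_apply]; ring)
  have hanti : AntitoneOn φ (Set.Ici (0:ℝ)) := by
    apply antitoneOn_of_hasDerivWithinAt_nonpos (convex_Ici 0)
    · intro t ht
      exact ((hφd t ht).continuousAt).continuousWithinAt
    · intro t ht
      rw [interior_Ici] at ht
      exact ((hφd t (le_of_lt ht)).hasDerivWithinAt).mono (by rw [interior_Ici])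
    · intro t ht
      rw [interior_Ici] at ht
      have he : (0:ℝ) < Real.exp (ωc * t) := Real.exp_pos _
      nlinarith [hg t (le_of_lt ht)]
  intro t ht
  have hle : φ t ≤ φ 0 := hanti Set.self_mem_Ici ht ht
  have h0 : φ 0 = z 0 - A / (ωc - 1) - B / ωc := by simp [hφ]
  have hzt : Real.exp (ωc * t) * z t ≤ z 0 - A / (ωc - 1) - B / ωc
      + A / (ωc - 1) * Real.exp ((ωc - 1) * t) + B / ωc * Real.exp (ωc * t) := by
    rw [h0] at hle
    simp only [hφ] at hle
    linarith
  have hE1pos : (0:ℝ) < Real.exp (-(ωc * t)) := Real.exp_pos _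
  have e1 : Real.exp (-(ωc * t)) * Real.exp (ωc * t) = 1 := by
    rw [← Real.exp_add]; simp
  have e2 : Real.exp (-(ωc * t)) * Real.exp ((ωc - 1) * t) = Real.exp (-t) := by
    rw [← Real.exp_add]; ring_nf
  have hE1le : Real.exp (-(ωc * t)) ≤ Real.exp (-t) := by
    apply Real.exp_le_exp.2; nlinarith
  have step : z t ≤ (z 0 - A / (ωc - 1) - B / ωc) * Real.exp (-(ωc * t))
      + A / (ωc - 1) * Real.exp (-t) + B / ωc := by
    calc z t = Real.exp (-(ωc * t)) * (Real.exp (ωc * t) * z t) := by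
          rw [← mul_assoc, e1, one_mul]
      _ ≤ Real.exp (-(ωc * t)) * (z 0 - A / (ωc - 1) - B / ωc
          + A / (ωc - 1) * Real.exp ((ωc - 1) * t) + B / ωc * Real.exp (ωc * t)) :=
          mul_le_mul_of_nonneg_left hzt hE1pos.le
      _ = (z 0 - A / (ωc - 1) - B / ωc) * Real.exp (-(ωc * t))
          + A / (ωc - 1) * (Real.exp (-(ωc * t)) * Real.exp ((ωc - 1) * t))
          + B / ωc * (Real.exp (-(ωc * t)) * Real.exp (ωc * t)) := by ring
      _ = _ := by rw [e1, e2]; ring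
  have hAd : 0 ≤ A / (ωc - 1) := div_nonneg hA hω1.le
  have hBd : 0 ≤ B / ωc := div_nonneg hB hω0.le
  have h5 : z 0 * Real.exp (-(ωc * t)) ≤ |z 0| * Real.exp (-t) := by
    calc z 0 * Real.exp (-(ωc * t)) ≤ |z 0| * Real.exp (-(ωc * t)) :=
        mul_le_mul_of_nonneg_right (le_abs_self _) hE1pos.le
      _ ≤ |z 0| * Real.exp (-t) := mul_le_mul_of_nonneg_left hE1le (abs_nonneg _)
  nlinarith [mul_nonneg hAd hE1pos.le, mul_nonneg hBd hE1pos.le]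

lemma scalar_decay {ωc A B : ℝ} (hω : 1 < ωc) (hA : 0 ≤ A) (hB : 0 ≤ B)
    {z g : ℝ → ℝ}
    (hz : ∀ t, 0 ≤ t → HasDerivAt z (-ωc * z t + g t) t)
    (hg : ∀ t, 0 ≤ t → |g t| ≤ A * Real.exp (-t) + B) :
    ∀ t, 0 ≤ t → |z t| ≤ (|z 0| + A / (ωc - 1)) * Real.exp (-t) + B / ωc := by
  intro t ht
  have hup := scalar_decay_upper hω hA hB hz
    (fun t ht => (abs_le.1 (hg t ht)).2) t ht
  have hlow := scalar_decay_upper hω hA hB (z := fun t => -(z t)) (g := fun t => -(g t))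
    (fun t ht => by
      have h := (hz t ht).neg
      exact h.congr_deriv (by ring))
    (fun t ht => by
      have := (abs_le.1 (hg t ht)).1
      linarith) t ht
  rw [abs_le]
  constructor
  · simp only [abs_neg] at hlow
    linarith
  · linarith


/-- Lower unitriangular change of basis to Jordan form. -/
noncomputable def jordT (n : ℕ) (ω : ℝ) : Matrix (Fin n) (Fin n) ℝ :=
  Matrix.of fun j i => ((j : ℕ).choose (i : ℕ)) * ω ^ ((j : ℕ) - (i : ℕ))

lemma shift_mulVec {n : ℕ} (v : Fin n → ℝ) (j : Fin n) :
    (shiftMat n).mulVec v j = if h : (j : ℕ) + 1 < n then v ⟨(j : ℕ) + 1, h⟩ else 0 := by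
  unfold shiftMat
  rw [mulVec, dotProduct]
  by_cases h : (j : ℕ) + 1 < n
  · rw [dif_pos h]
    rw [Finset.sum_eq_single (⟨(j : ℕ) + 1, h⟩ : Fin n)]
    · simp
    · intro i _ hi
      simp only [of_apply]
      rw [if_neg, zero_mul]
      intro hc
      exact hi (by ext; exact hc.symm)
    · simp
  · rw [dif_neg h]
    apply Finset.sum_eq_zero
    intro i _
    simp only [of_apply]
    rw [if_neg, zero_mul]
    intro hc
    exact h (hc ▸ i.isLt)

lemma jordT_mulVec_lastBasis {n : ℕ} (hn : 1 ≤ n) (ω : ℝ) :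
    (jordT n ω).mulVec (lastBasis n) = lastBasis n := by
  funext j
  unfold jordT lastBasis
  rw [mulVec, dotProduct]
  rw [Finset.sum_eq_single (⟨n - 1, by omega⟩ : Fin n)]
  · simp only [of_apply, if_pos rfl, mul_one]
    by_cases hj : (j : ℕ) = n - 1
    · rw [if_pos hj, hj]
      simp
    · rw [if_neg hj]
      rw [Nat.choose_eq_zero_of_lt (by have := j.isLt; omega)]
      simp
  · intro i _ hi
    rw [if_neg, mul_zero]
    intro hc
    exact hi (by ext; simpa using hc)
  · simp

lemma pascal_pow (ω : ℝ) (a b : ℕ) (hb : 1 ≤ b) :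
    (((a+1).choose b : ℕ) : ℝ) * ω ^ (a + 1 - b)
      = ((a.choose (b-1) : ℕ) : ℝ) * ω ^ (a - (b-1))
        + ω * (((a.choose b : ℕ) : ℝ) * ω ^ (a - b)) := by
  obtain ⟨b', rfl⟩ : ∃ b', b = b' + 1 := ⟨b - 1, by omega⟩
  rw [Nat.choose_succ_succ']
  push_cast
  rcases Nat.lt_or_ge a (b' + 1) with h | h
  · rw [Nat.choose_eq_zero_of_lt h]
    push_cast
    ring
  · have e2 : a - b' = (a - (b' + 1)) + 1 := by omega
    rw [add_mul, e2, pow_succ]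
    ring

/-- The key similarity identity: `T·M = (N − ω·1)·T`. -/
lemma jordT_key {n : ℕ} (hn : 1 ≤ n) (ω : ℝ) :
    jordT n ω * (shiftMat n - vecMulVec (lastBasis n) (ctrlGain n ω))
      = (shiftMat n - ω • (1 : Matrix (Fin n) (Fin n) ℝ)) * jordT n ω := by
  ext j l
  rw [mul_apply, mul_apply]
  -- RHS
  have hrhs : ∑ i, (shiftMat n - ω • (1 : Matrix (Fin n) (Fin n) ℝ)) j i * jordT n ω i l
      = (if h : (j : ℕ) + 1 < n then jordT n ω ⟨(j : ℕ) + 1, h⟩ l else 0)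
        - ω * jordT n ω j l := by
    have : ∀ i, (shiftMat n - ω • (1 : Matrix (Fin n) (Fin n) ℝ)) j i * jordT n ω i l
        = (if (j : ℕ) + 1 = (i : ℕ) then jordT n ω i l else 0)
          - ω * (if j = i then jordT n ω i l else 0) := by
      intro i
      simp only [Matrix.sub_apply, Matrix.smul_apply, one_apply, shiftMat, of_apply, smul_eq_mul]
      by_cases h1 : (j : ℕ) + 1 = (i : ℕ) <;> by_cases h2 : j = i <;>
        simp [h1, h2] <;> ring
    simp only [this]
    rw [Finset.sum_sub_distrib]
    congr 1
    · by_cases h : (j : ℕ) + 1 < n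
      · rw [dif_pos h, Finset.sum_eq_single (⟨(j : ℕ) + 1, h⟩ : Fin n)]
        · simp
        · intro i _ hi
          rw [if_neg]
          intro hc
          exact hi (by ext; exact hc.symm)
        · simp
      · rw [dif_neg h]
        apply Finset.sum_eq_zero
        intro i _
        rw [if_neg]
        intro hc
        exact h (hc ▸ i.isLt)
    · rw [← Finset.mul_sum]
      congr 1
      rw [Finset.sum_eq_single j]
      · simp
      · intro i _ hi
        rw [if_neg (fun hc => hi hc.symm)]
      · simp
  -- LHS
  have hTlast : ∀ i : Fin n, jordT n ω j i * lastBasis n i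
      = (if (i : ℕ) = n - 1 then (if (j : ℕ) = n - 1 then (1:ℝ) else 0) else 0) := by
    intro i
    unfold jordT lastBasis
    simp only [of_apply]
    by_cases hi : (i : ℕ) = n - 1
    · rw [if_pos hi, if_pos hi, mul_one]
      by_cases hj : (j : ℕ) = n - 1
      · rw [if_pos hj, hi, hj]
        simp
      · rw [if_neg hj, Nat.choose_eq_zero_of_lt (by have := j.isLt; omega)]
        simp
    · rw [if_neg hi, if_neg hi, mul_zero]
  have hlhs : ∑ i, jordT n ω j i * (shiftMat n - vecMulVec (lastBasis n) (ctrlGain n ω)) i l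
      = (if h : 1 ≤ (l : ℕ) then jordT n ω j ⟨(l : ℕ) - 1, by omega⟩ else 0)
        - (if (j : ℕ) = n - 1 then (1:ℝ) else 0) * ctrlGain n ω l := by
    have hsplit : ∀ i, jordT n ω j i * (shiftMat n - vecMulVec (lastBasis n) (ctrlGain n ω)) i l
        = (if (i : ℕ) + 1 = (l : ℕ) then jordT n ω j i else 0)
          - (jordT n ω j i * lastBasis n i) * ctrlGain n ω l := by
      intro i
      simp only [Matrix.sub_apply, vecMulVec_apply, shiftMat, of_apply]
      by_cases h1 : (i : ℕ) + 1 = (l : ℕ) <;> simp [h1] <;> ring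
    simp only [hsplit]
    rw [Finset.sum_sub_distrib]
    congr 1
    · by_cases h : 1 ≤ (l : ℕ)
      · rw [dif_pos h, Finset.sum_eq_single (⟨(l : ℕ) - 1, by omega⟩ : Fin n)]
        · rw [if_pos (by simp; omega)]
        · intro i _ hi
          rw [if_neg]
          intro hc
          exact hi (by ext; simp; omega)
        · simp
      · rw [dif_neg h]
        apply Finset.sum_eq_zero
        intro i _
        rw [if_neg (by omega)]
    · rw [← Finset.sum_mul]
      congr 1
      simp only [hTlast]
      rw [Finset.sum_eq_single (⟨n - 1, by omega⟩ : Fin n)]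
      · simp
      · intro i _ hi
        rw [if_neg]
        intro hc
        exact hi (by ext; simpa using hc)
      · simp
  rw [hlhs, hrhs]
  unfold jordT ctrlGain
  simp only [of_apply]
  by_cases hj : (j : ℕ) + 1 < n
  · rw [dif_pos hj]
    have hjn : ¬ ((j : ℕ) = n - 1) := by omega
    rw [if_neg hjn]
    by_cases hl : 1 ≤ (l : ℕ)
    · rw [dif_pos hl]
      have this := pascal_pow ω (j : ℕ) (l : ℕ) hl
      push_cast at this ⊢
      linarith [this]
    · rw [dif_neg hl]
      have hl0 : (l : ℕ) = 0 := by omega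
      simp only [hl0, Nat.choose_zero_right, Nat.sub_zero, Nat.cast_one, one_mul, mul_zero,
        zero_mul, sub_zero]
      rw [pow_succ]
      ring
  · rw [dif_neg hj]
    have hjn : (j : ℕ) = n - 1 := by omega
    rw [if_pos hjn, one_mul]
    by_cases hl : 1 ≤ (l : ℕ)
    · rw [dif_pos hl]
      have key := pascal_pow ω (n - 1) (l : ℕ) hl
      have hn1 : n - 1 + 1 = n := by omega
      rw [hn1] at key
      simp only [hjn]
      push_cast at key ⊢
      linarith [key]
    · rw [dif_neg hl]
      have hl0 : (l : ℕ) = 0 := by omega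
      simp only [hjn, hl0, Nat.choose_zero_right, Nat.sub_zero, Nat.cast_one, one_mul]
      have : ω ^ n = ω * ω ^ (n - 1) := by
        conv_lhs => rw [show n = (n - 1) + 1 by omega]
        rw [pow_succ]
        ring
      linarith [this]


lemma coord_le_norm {n : ℕ} (x : EuclideanSpace ℝ (Fin n)) (j : Fin n) : |x j| ≤ ‖x‖ := by
  rw [EuclideanSpace.norm_eq, ← Real.sqrt_sq_eq_abs]
  apply Real.sqrt_le_sqrt
  have := Finset.single_le_sum (f := fun i => ‖x i‖ ^ 2)
    (fun i _ => sq_nonneg _) (Finset.mem_univ j)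
  simpa [Real.norm_eq_abs, sq_abs] using this

lemma norm_le_sum_abs {n : ℕ} (x : EuclideanSpace ℝ (Fin n)) : ‖x‖ ≤ ∑ j, |x j| := by
  rw [EuclideanSpace.norm_eq]
  have h1 : ∑ i, ‖x i‖ ^ 2 ≤ (∑ j, |x j|) ^ 2 := by
    simpa [Real.norm_eq_abs] using
      Finset.sum_sq_le_sq_sum_of_nonneg (s := Finset.univ)
        (f := fun i => |x i|) (fun i _ => abs_nonneg _)
  calc Real.sqrt (∑ i, ‖x i‖ ^ 2) ≤ Real.sqrt ((∑ j, |x j|) ^ 2) := Real.sqrt_le_sqrt h1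
    _ = ∑ j, |x j| := Real.sqrt_sq (Finset.sum_nonneg fun i _ => abs_nonneg _)

private lemma toEuclideanLin_coord {n : ℕ} (A : Matrix (Fin n) (Fin n) ℝ)
    (x : EuclideanSpace ℝ (Fin n)) (j : Fin n) :
    (Matrix.toEuclideanLin A x) j = A.mulVec (fun i => x i) j := rfl

example {n : ℕ} (x : EuclideanSpace ℝ (Fin (n+1))) (κ : Fin (n+1) → ℝ) :
    κ ⬝ᵥ (EuclideanSpace.equiv (Fin (n+1)) ℝ) x
    = inner ℝ ((EuclideanSpace.equiv (Fin (n+1)) ℝ).symm κ) x := by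
  simp [PiLp.inner_apply, dotProduct, RCLike.inner_apply, mul_comm]


/-- Lemma 2 of the paper: input-to-state stability of the control error subsystem
`e′ = (A_n − b_n·k^⊤)·e + ⟨(k,1), z̃⟩·b_n` with bandwidth-parametrized gain `k`:
`‖e(t)‖ ≤ ω_c^{n−1}·c₅·‖e(0)‖·exp(−c₆ω_c t) + ω_c^{n−2}·c₇·sup‖z̃‖`. -/
theorem controller_ISS (n : ℕ) (hn : 1 ≤ n) (ωc : ℝ) (hωc : 1 < ωc) :
    ∃ c₅ c₆ c₇ : ℝ, 0 < c₅ ∧ 0 < c₆ ∧ 0 < c₇ ∧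
      ∀ (e : ℝ → EuclideanSpace ℝ (Fin n)) (ztil : ℝ → EuclideanSpace ℝ (Fin (n + 1))) (S : ℝ),
        (∀ t : ℝ, 0 ≤ t → ‖ztil t‖ ≤ S) →
        (∀ t : ℝ, 0 ≤ t → HasDerivAt e
          ((Matrix.toEuclideanLin
              (shiftMat n - Matrix.vecMulVec (lastBasis n) (ctrlGain n ωc))) (e t)
            + ((Fin.snoc (ctrlGain n ωc) 1 : Fin (n + 1) → ℝ)
                  ⬝ᵥ (EuclideanSpace.equiv (Fin (n + 1)) ℝ) (ztil t))
              • (EuclideanSpace.equiv (Fin n) ℝ).symm (lastBasis n)) t) →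
        ∀ t : ℝ, 0 ≤ t →
          ‖e t‖ ≤ ωc ^ ((n : ℤ) - 1) * c₅ * ‖e 0‖ * Real.exp (-(c₆ * ωc * t))
            + ωc ^ ((n : ℤ) - 2) * c₇ * S := by
  have hω0 : (0:ℝ) < ωc := lt_trans one_pos hωc
  have hω1 : (0:ℝ) < ωc - 1 := by linarith
  set T := jordT n ωc with hT
  set M := shiftMat n - vecMulVec (lastBasis n) (ctrlGain n ωc) with hM
  -- determinant of T is 1
  have hdet : T.det = 1 := by
    rw [Matrix.det_of_lowerTriangular T]
    · apply Finset.prod_eq_one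
      intro i _
      simp [hT, jordT]
    · intro i j hij
      have : (i : ℕ) < (j : ℕ) := hij
      simp [hT, jordT, Nat.choose_eq_zero_of_lt this]
  have hdetu : IsUnit T.det := by rw [hdet]; exact isUnit_one
  -- continuous linear maps
  set TL : EuclideanSpace ℝ (Fin n) →L[ℝ] EuclideanSpace ℝ (Fin n) :=
    LinearMap.toContinuousLinearMap (Matrix.toEuclideanLin T) with hTL
  set TIL : EuclideanSpace ℝ (Fin n) →L[ℝ] EuclideanSpace ℝ (Fin n) :=
    LinearMap.toContinuousLinearMap (Matrix.toEuclideanLin T⁻¹) with hTIL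
  have hinv : ∀ x : EuclideanSpace ℝ (Fin n), TIL (TL x) = x := by
    intro x
    have : T⁻¹ * T = 1 := Matrix.nonsing_inv_mul T hdetu
    ext j
    show (T⁻¹).mulVec (fun i => (Matrix.toEuclideanLin T x) i) j = x j
    have h2 : (fun i => (Matrix.toEuclideanLin T x) i) = T.mulVec (fun i => x i) := rfl
    rw [h2, Matrix.mulVec_mulVec, this, Matrix.one_mulVec]
  set R : ℝ := ‖TL‖ + 1 with hR
  set CT : ℝ := ‖TIL‖ + 1 with hCT
  set Kp : ℝ := ‖(EuclideanSpace.equiv (Fin (n+1)) ℝ).symm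
      (Fin.snoc (ctrlGain n ωc) 1 : Fin (n + 1) → ℝ)‖ + 1 with hKp
  have hRpos : 0 < R := by positivity
  have hCTpos : 0 < CT := by positivity
  have hKppos : 0 < Kp := by positivity
  -- recursive coefficient sequences
  set a : ℕ → ℝ := fun d => Nat.rec R (fun _ ad => R + ad / (ωc - 1)) d with ha
  set b : ℕ → ℝ := fun d => Nat.rec (Kp / ωc) (fun _ bd => bd / ωc) d with hb
  have ha0 : a 0 = R := rfl
  have haS : ∀ d, a (d+1) = R + a d / (ωc - 1) := fun d => rfl
  have hb0 : b 0 = Kp / ωc := rfl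
  have hbS : ∀ d, b (d+1) = b d / ωc := fun d => rfl
  have hapos : ∀ d, 0 < a d := by
    intro d
    induction d with
    | zero => rw [ha0]; exact hRpos
    | succ d ih => rw [haS]; positivity
  have hbpos : ∀ d, 0 < b d := by
    intro d
    induction d with
    | zero => rw [hb0]; positivity
    | succ d ih => rw [hbS]; positivity
  set amax : ℝ := ∑ d ∈ Finset.range n, a d with hamax
  set bmax : ℝ := ∑ d ∈ Finset.range n, b d with hbmax
  have hamaxpos : 0 < amax := Finset.sum_pos (fun d _ => hapos d)
    (by rw [Finset.nonempty_range_iff]; omega)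
  have hbmaxpos : 0 < bmax := Finset.sum_pos (fun d _ => hbpos d)
    (by rw [Finset.nonempty_range_iff]; omega)
  have hale : ∀ d, d < n → a d ≤ amax :=
    fun d hd => Finset.single_le_sum (f := a) (fun i _ => (hapos i).le)
      (Finset.mem_range.2 hd)
  have hble : ∀ d, d < n → b d ≤ bmax :=
    fun d hd => Finset.single_le_sum (f := b) (fun i _ => (hbpos i).le)
      (Finset.mem_range.2 hd)
  have hzpow1 : (0:ℝ) < ωc ^ ((n : ℤ) - 1) := zpow_pos hω0 _
  have hzpow2 : (0:ℝ) < ωc ^ ((n : ℤ) - 2) := zpow_pos hω0 _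
  refine ⟨CT * n * amax / ωc ^ ((n : ℤ) - 1), 1 / ωc,
    CT * n * bmax / ωc ^ ((n : ℤ) - 2), ?_, ?_, ?_, ?_⟩
  · have : (0:ℝ) < (n:ℝ) := by exact_mod_cast hn
    positivity
  · positivity
  · have : (0:ℝ) < (n:ℝ) := by exact_mod_cast hn
    positivity
  intro e ztil S hS hD t ht
  have hS0 : 0 ≤ S := le_trans (norm_nonneg _) (hS 0 le_rfl)
  set Y : ℝ := ‖e 0‖ with hY
  have hY0 : 0 ≤ Y := norm_nonneg _
  -- input
  set u : ℝ → ℝ := fun t => (Fin.snoc (ctrlGain n ωc) 1 : Fin (n + 1) → ℝ)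
      ⬝ᵥ (EuclideanSpace.equiv (Fin (n + 1)) ℝ) (ztil t) with hu
  have hubound : ∀ t, 0 ≤ t → |u t| ≤ Kp * S := by
    intro t ht
    have heq : u t = inner ℝ ((EuclideanSpace.equiv (Fin (n+1)) ℝ).symm
        (Fin.snoc (ctrlGain n ωc) 1 : Fin (n + 1) → ℝ)) (ztil t) := by
      simp [hu, PiLp.inner_apply, dotProduct, RCLike.inner_apply, mul_comm]
    rw [heq]
    calc |_| ≤ _ := abs_real_inner_le_norm _ _
      _ ≤ Kp * S := by
          apply mul_le_mul (by rw [hKp]; linarith) (hS t ht) (norm_nonneg _) hKppos.le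
  -- transformed coordinates
  set y : Fin n → ℝ → ℝ := fun j s => T.mulVec (fun i => e s i) j with hy
  -- initial bound
  have hy0 : ∀ j, |y j 0| ≤ R * Y := by
    intro j
    have h1 : y j 0 = (TL (e 0)) j := rfl
    rw [h1]
    calc |(TL (e 0)) j| ≤ ‖TL (e 0)‖ := coord_le_norm _ _
      _ ≤ ‖TL‖ * Y := TL.le_opNorm _
      _ ≤ R * Y := by apply mul_le_mul_of_nonneg_right (by rw [hR]; linarith) hY0
  -- derivative of transformed coordinates
  have hyd : ∀ (j : Fin n) (t : ℝ), 0 ≤ t → HasDerivAt (y j)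
      (-ωc * y j t + (if h : (j : ℕ) + 1 < n then y ⟨(j : ℕ) + 1, h⟩ t else u t)) t := by
    intro j t ht
    have hDt := hD t ht
    set X : EuclideanSpace ℝ (Fin n) := (Matrix.toEuclideanLin M) (e t)
        + u t • (EuclideanSpace.equiv (Fin n) ℝ).symm (lastBasis n) with hX
    have hcoord : ∀ i : Fin n, HasDerivAt (fun s => e s i) (X i) t := by
      intro i
      have h := (EuclideanSpace.proj (𝕜 := ℝ) i).hasFDerivAt.comp_hasDerivAt t hDt
      simpa [Function.comp_def] using h
    have hsum : HasDerivAt (fun s => ∑ i, T j i * e s i) (∑ i, T j i * X i) t :=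
      HasDerivAt.fun_sum (fun i _ => (hcoord i).const_mul (T j i))
    have hyfun : (fun s => ∑ i, T j i * e s i) = y j := by
      funext s
      simp [hy, Matrix.mulVec, dotProduct]
    rw [hyfun] at hsum
    have hXcoords : (fun i => X i) = M.mulVec (fun i => e t i) + u t • lastBasis n := by
      funext i
      rfl
    have hval : ∑ i, T j i * X i
        = -ωc * y j t + (if h : (j : ℕ) + 1 < n then y ⟨(j : ℕ) + 1, h⟩ t else u t) := by
      have h0 : ∑ i, T j i * X i = T.mulVec (fun i => X i) j := by
        simp [Matrix.mulVec, dotProduct]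
      rw [h0, hXcoords, Matrix.mulVec_add, Matrix.mulVec_smul,
        jordT_mulVec_lastBasis hn ωc, Matrix.mulVec_mulVec, jordT_key hn ωc,
        ← Matrix.mulVec_mulVec, Matrix.sub_mulVec, Matrix.smul_mulVec,
        Matrix.one_mulVec]
      simp only [Pi.add_apply, Pi.sub_apply, Pi.smul_apply, smul_eq_mul]
      rw [shift_mulVec]
      show (if h : (j : ℕ) + 1 < n
          then (T *ᵥ fun i => e t i) ⟨(j : ℕ) + 1, h⟩ else 0)
          - ωc * (T *ᵥ fun i => e t i) j + u t * lastBasis n j = _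
      unfold lastBasis
      by_cases h : (j : ℕ) + 1 < n
      · rw [dif_pos h, dif_pos h, if_neg (by omega)]
        show _ = -ωc * (T *ᵥ fun i => e t i) j + (T *ᵥ fun i => e t i) ⟨(j : ℕ) + 1, h⟩
        ring
      · rw [dif_neg h, dif_neg h, if_pos (by omega)]
        show _ = -ωc * (T *ᵥ fun i => e t i) j + u t
        ring
    rw [hval] at hsum
    exact hsum
  -- main induction
  have main : ∀ (d : ℕ) (j : Fin n), (j : ℕ) + d = n - 1 →
      ∀ t, 0 ≤ t → |y j t| ≤ a d * Y * Real.exp (-t) + b d * S := by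
    intro d
    induction d with
    | zero =>
      intro j hj t ht
      have hnot : ¬ ((j : ℕ) + 1 < n) := by omega
      have hz : ∀ s, 0 ≤ s → HasDerivAt (y j) (-ωc * y j s + u s) s := by
        intro s hs
        have := hyd j s hs
        rwa [dif_neg hnot] at this
      have hg : ∀ s, 0 ≤ s → |u s| ≤ 0 * Real.exp (-s) + Kp * S := by
        intro s hs
        rw [zero_mul, zero_add]
        exact hubound s hs
      have := scalar_decay hωc le_rfl (by positivity) hz hg t ht
      calc |y j t| ≤ (|y j 0| + 0 / (ωc - 1)) * Real.exp (-t) + Kp * S / ωc := this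
        _ ≤ a 0 * Y * Real.exp (-t) + b 0 * S := by
            rw [ha0, hb0]
            have h1 : |y j 0| + 0 / (ωc - 1) ≤ R * Y := by
              rw [zero_div, add_zero]; exact hy0 j
            have h2 : Kp * S / ωc = Kp / ωc * S := by ring
            rw [h2]
            exact add_le_add (mul_le_mul_of_nonneg_right h1 (Real.exp_pos _).le) le_rfl
    | succ d ih =>
      intro j hj t ht
      have hlt : (j : ℕ) + 1 < n := by omega
      set j' : Fin n := ⟨(j : ℕ) + 1, hlt⟩ with hj'
      have hih := ih j' (by simp [hj']; omega)
      have hz : ∀ s, 0 ≤ s → HasDerivAt (y j) (-ωc * y j s + y j' s) s := by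
        intro s hs
        have := hyd j s hs
        rwa [dif_pos hlt] at this
      have hg : ∀ s, 0 ≤ s → |y j' s| ≤ (a d * Y) * Real.exp (-s) + b d * S := by
        intro s hs
        exact hih s hs
      have hnn1 : 0 ≤ a d * Y := mul_nonneg (hapos d).le hY0
      have hnn2 : 0 ≤ b d * S := mul_nonneg (hbpos d).le hS0
      have := scalar_decay hωc hnn1 hnn2 hz hg t ht
      calc |y j t| ≤ (|y j 0| + a d * Y / (ωc - 1)) * Real.exp (-t) + b d * S / ωc := this
        _ ≤ a (d+1) * Y * Real.exp (-t) + b (d+1) * S := by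
            rw [haS, hbS]
            have h1 : |y j 0| + a d * Y / (ωc - 1) ≤ (R + a d / (ωc - 1)) * Y := by
              have := hy0 j
              have hexp : a d * Y / (ωc - 1) = a d / (ωc - 1) * Y := by ring
              rw [hexp, add_mul]
              exact add_le_add_left this _
            have h2 : b d * S / ωc = b d / ωc * S := by ring
            rw [h2]
            exact add_le_add (mul_le_mul_of_nonneg_right h1 (Real.exp_pos _).le) le_rfl
  -- conclusion
  have hyb : ∀ j : Fin n, |y j t| ≤ amax * Y * Real.exp (-t) + bmax * S := by
    intro j
    have hd : (j : ℕ) + (n - 1 - (j : ℕ)) = n - 1 := by omega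
    have := main (n - 1 - (j : ℕ)) j hd t ht
    have hdd : n - 1 - (j : ℕ) < n := by omega
    calc |y j t| ≤ a _ * Y * Real.exp (-t) + b _ * S := this
      _ ≤ amax * Y * Real.exp (-t) + bmax * S := by
          apply add_le_add
          · apply mul_le_mul_of_nonneg_right _ (Real.exp_pos _).le
            exact mul_le_mul_of_nonneg_right (hale _ hdd) hY0
          · exact mul_le_mul_of_nonneg_right (hble _ hdd) hS0
  have hfinal : ‖e t‖ ≤ CT * n * amax * Y * Real.exp (-t) + CT * n * bmax * S := by
    have h1 : ‖e t‖ ≤ CT * ‖TL (e t)‖ := by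
      calc ‖e t‖ = ‖TIL (TL (e t))‖ := by rw [hinv]
        _ ≤ ‖TIL‖ * ‖TL (e t)‖ := TIL.le_opNorm _
        _ ≤ CT * ‖TL (e t)‖ := by
            apply mul_le_mul_of_nonneg_right (by rw [hCT]; linarith) (norm_nonneg _)
    have h2 : ‖TL (e t)‖ ≤ ∑ j, |y j t| := by
      have : ∀ j : Fin n, (TL (e t)) j = y j t := fun j => rfl
      calc ‖TL (e t)‖ ≤ ∑ j, |(TL (e t)) j| := norm_le_sum_abs _
        _ = ∑ j, |y j t| := by simp only [this]
    have h3 : ∑ j : Fin n, |y j t| ≤ (n : ℝ) * (amax * Y * Real.exp (-t) + bmax * S) := by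
      calc ∑ j : Fin n, |y j t| ≤ ∑ _j : Fin n, (amax * Y * Real.exp (-t) + bmax * S) :=
            Finset.sum_le_sum (fun j _ => hyb j)
        _ = (n : ℝ) * (amax * Y * Real.exp (-t) + bmax * S) := by
            rw [Finset.sum_const, Finset.card_univ, Fintype.card_fin, nsmul_eq_mul]
    calc ‖e t‖ ≤ CT * ‖TL (e t)‖ := h1
      _ ≤ CT * ((n : ℝ) * (amax * Y * Real.exp (-t) + bmax * S)) := by
          apply mul_le_mul_of_nonneg_left (le_trans h2 h3) hCTpos.le
      _ = CT * n * amax * Y * Real.exp (-t) + CT * n * bmax * S := by ring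
  -- rewrite constants
  have e5 : ωc ^ ((n : ℤ) - 1) * (CT * n * amax / ωc ^ ((n : ℤ) - 1)) = CT * n * amax := by
    field_simp
  have e7 : ωc ^ ((n : ℤ) - 2) * (CT * n * bmax / ωc ^ ((n : ℤ) - 2)) = CT * n * bmax := by
    field_simp
  have e6 : -(1 / ωc * ωc * t) = -t := by field_simp
  rw [e5, e7, e6]
  exact hfinal
end
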